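/- Let d be a prime, n ≥ 1, and Γ a symmetric n×n matrix over ZMod d with zero diagonal whose associated weighted graph is two-colorable: there is a partition Fin n = A ∪ B with Γ u v = 0 whenever u,v ∈ A or u,v ∈ B. Then the ZMod d-rank of Γ equals 2·(Matrix.rank Γ_{A,B}), and the Schmidt rank of the graph state satisfies d ^ (Matrix.rank Γ_{A,B}) ≤ r(ψ_Γ) ≤ d ^ (min |A| |B|); in particular the Schmidt measure E_S(ψ_Γ) = log_d r(ψ_Γ) is bounded below by half the rank of the adjacency matrix and above by ⌊n/2⌋. -/
import Mathlib


/-- The graph-state amplitude function of an adjacency matrix `Γ` over `ZMod d`. -/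
noncomputable def graphState (d n : ℕ) (ω : ℂ) (Γ : Matrix (Fin n) (Fin n) (ZMod d)) :
    (Fin n → ZMod d) → ℂ := fun x =>
  (((d : ℝ) ^ (-(n : ℝ) / 2) : ℝ) : ℂ) *
    ω ^ (∑ u : Fin n, ∑ v : Fin n, if u < v then Γ u v * x u * x v else 0).val

/-- The Schmidt rank of `ψ : (Fin n → ZMod d) → ℂ`: the least `R` such that `ψ` is a
sum of `R` product functions. -/
noncomputable def schmidtRank {d n : ℕ} (ψ : (Fin n → ZMod d) → ℂ) : ℕ :=
  sInf {R : ℕ | ∃ f : Fin R → Fin n → ZMod d → ℂ, ∀ x, ψ x = ∑ i, ∏ j, f i j (x j)}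

section Aux
open Finset Matrix

section chi
variable {d : ℕ} {ω : ℂ}
lemma pow_mod_eq (h1 : ω ^ d = 1) (m : ℕ) : ω ^ (m % d) = ω ^ m := by
  conv_rhs => rw [← Nat.mod_add_div m d, pow_add, pow_mul, h1, one_pow, mul_one]

lemma chi_add [NeZero d] (h1 : ω ^ d = 1) (a b : ZMod d) :
    ω ^ (a + b).val = ω ^ a.val * ω ^ b.val := by
  rw [ZMod.val_add, pow_mod_eq h1, pow_add]

lemma chi_sum [NeZero d] (h1 : ω ^ d = 1) {ι : Type*} (s : Finset ι) (g : ι → ZMod d) :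
    ω ^ (∑ i ∈ s, g i).val = ∏ i ∈ s, ω ^ (g i).val := by
  classical
  induction s using Finset.cons_induction with
  | empty => simp
  | cons a s ha ih => rw [Finset.sum_cons, chi_add h1, ih, Finset.prod_cons]

lemma chi_sum_univ [NeZero d] (hω : IsPrimitiveRoot ω d) (hd : 1 < d) :
    ∑ k : ZMod d, ω ^ k.val = 0 := by
  rw [← hω.geom_sum_eq_zero hd]
  exact Finset.sum_nbij' (fun k => k.val) (fun i => (i : ZMod d))
    (fun a _ => Finset.mem_range.mpr (ZMod.val_lt a))
    (fun a _ => Finset.mem_univ _)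
    (fun a _ => ZMod.natCast_rightInverse a)
    (fun a ha => ZMod.val_cast_of_lt (Finset.mem_range.mp ha))
    (fun a _ => rfl)

lemma chi_orth [Fact (Nat.Prime d)] (hω : IsPrimitiveRoot ω d) (c : ZMod d) :
    ∑ k : ZMod d, ω ^ (c * k).val = if c = 0 then (d : ℂ) else 0 := by
  have hd : Nat.Prime d := Fact.out
  split_ifs with h
  · subst h
    simp [ZMod.card]
  · rw [← chi_sum_univ hω hd.one_lt]
    exact Equiv.sum_comp (Equiv.mulLeft₀ c h) (fun k => ω ^ k.val)

lemma chi_orth_vec {ι : Type*} [Fintype ι] [DecidableEq ι] [Fact (Nat.Prime d)]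
    (hω : IsPrimitiveRoot ω d) (c : ι → ZMod d) :
    ∑ v : ι → ZMod d, ω ^ (∑ u, c u * v u).val
      = if c = 0 then ((d : ℂ) ^ Fintype.card ι) else 0 := by
  have hd : Nat.Prime d := Fact.out
  have h1 : ω ^ d = 1 := hω.pow_eq_one
  have step1 : ∑ v : ι → ZMod d, ω ^ (∑ u, c u * v u).val
      = ∏ u, ∑ k : ZMod d, ω ^ (c u * k).val := by
    rw [Finset.prod_univ_sum, Fintype.piFinset_univ]
    exact Finset.sum_congr rfl fun v _ => chi_sum h1 _ _
  rw [step1]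
  simp_rw [chi_orth hω]
  by_cases hc : c = 0
  · subst hc
    simp
  · obtain ⟨u0, hu0⟩ := Function.ne_iff.mp hc
    rw [if_neg hc]
    exact Finset.prod_eq_zero (Finset.mem_univ u0) (if_neg (by simpa using hu0))
end chi

lemma schmidt_lower_bound {d n : ℕ} [Fact (Nat.Prime d)] {ω : ℂ} (hω : IsPrimitiveRoot ω d)
    (A : Finset (Fin n)) (M : Matrix {u // u ∈ A} {u // u ∈ Aᶜ} (ZMod d))
    (ψ : (Fin n → ZMod d) → ℂ) (c : ℂ) (hc : c ≠ 0)
    (hψ : ∀ x, ψ x = c * ω ^ (∑ i : {u // u ∈ A}, ∑ j : {u // u ∈ Aᶜ},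
      M i j * x i * x j).val)
    (R : ℕ) (f : Fin R → Fin n → ZMod d → ℂ) (hf : ∀ x, ψ x = ∑ i, ∏ j, f i j (x j)) :
    d ^ M.rank ≤ R := by
  classical
  have hd : Nat.Prime d := Fact.out
  have h1 : ω ^ d = 1 := hω.pow_eq_one
  set glue : ({u // u ∈ A} → ZMod d) → ({u // u ∈ Aᶜ} → ZMod d) → (Fin n → ZMod d) :=
    fun a b u => if h : u ∈ A then a ⟨u, h⟩ else b ⟨u, Finset.mem_compl.mpr h⟩ with hglue
  have hglueS : ∀ a b (i : {u // u ∈ A}), glue a b (i : Fin n) = a i := fun a b i => dif_pos i.2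
  have hglueT : ∀ a b (j : {u // u ∈ Aᶜ}), glue a b (j : Fin n) = b j :=
    fun a b j => dif_neg (Finset.mem_compl.mp j.2)
  set Ψ : Matrix ({u // u ∈ A} → ZMod d) ({u // u ∈ Aᶜ} → ZMod d) ℂ := fun a b => ψ (glue a b) with hΨdef
  -- Step A : rank Ψ ≤ R
  have hstepA : Ψ.rank ≤ R := by
    set G : Matrix ({u // u ∈ A} → ZMod d) (Fin R) ℂ := fun a i => ∏ j : {u // u ∈ A}, f i j (a j) with hG
    set H : Matrix (Fin R) ({u // u ∈ Aᶜ} → ZMod d) ℂ := fun i b => ∏ j : {u // u ∈ Aᶜ}, f i j (b j) with hH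
    have hGH : Ψ = G * H := by
      ext a b
      rw [hΨdef]
      show ψ (glue a b) = _
      rw [hf, Matrix.mul_apply]
      refine Finset.sum_congr rfl fun i _ => ?_
      rw [hG, hH]
      show ∏ j : Fin n, f i j (glue a b j)
        = (∏ j : {u // u ∈ A}, f i j (a j)) * ∏ j : {u // u ∈ Aᶜ}, f i j (b j)
      rw [← Finset.prod_mul_prod_compl A (fun j => f i j (glue a b j)),
        ← Finset.prod_coe_sort A, ← Finset.prod_coe_sort Aᶜ]
      congr 1
      · exact Finset.prod_congr rfl fun j _ => by rw [hglueS]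
      · exact Finset.prod_congr rfl fun j _ => by rw [hglueT]
    calc Ψ.rank = (G * H).rank := by rw [hGH]
      _ ≤ H.rank := Matrix.rank_mul_le_right G H
      _ ≤ Fintype.card (Fin R) := Matrix.rank_le_card_height H
      _ = R := Fintype.card_fin R
  -- Step B : d ^ M.rank ≤ rank Ψ
  set N := d ^ M.rank with hN
  have hcardV : Fintype.card (LinearMap.range M.mulVecLin) = N := by
    rw [hN, Matrix.rank]
    have h := Module.card_eq_pow_finrank (K := ZMod d) (V := ↥(LinearMap.range M.mulVecLin))
    rwa [ZMod.card] at h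
  let ρ0 : Fin N ≃ (LinearMap.range M.mulVecLin) := (Fintype.equivFinOfCardEq hcardV).symm
  have hρ : ∀ i : Fin N, ∃ b : {u // u ∈ Aᶜ} → ZMod d, M.mulVec b = (ρ0 i : {u // u ∈ A} → ZMod d) := fun i => (ρ0 i).2
  choose ρ hρspec using hρ
  have hinj : Function.Injective fun i => M.mulVec (ρ i) := by
    intro i i' h
    simp only [hρspec] at h
    exact ρ0.injective (Subtype.val_injective h)
  set g0 : ℂ := (d : ℂ) ^ Fintype.card {u // u ∈ A} with hg0
  have hg0ne : g0 ≠ 0 := pow_ne_zero _ (Nat.cast_ne_zero.mpr hd.ne_zero)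
  set Φ : Matrix ({u // u ∈ A} → ZMod d) ({u // u ∈ A} → ZMod d) ℂ := fun a v => ω ^ (∑ u, a u * v u).val with hΦ
  set Φi : Matrix ({u // u ∈ A} → ZMod d) ({u // u ∈ A} → ZMod d) ℂ := fun a v => ω ^ (∑ u, (-(a u)) * v u).val with hΦi
  have hΦiΦ : Φi * Φ = g0 • (1 : Matrix ({u // u ∈ A} → ZMod d) ({u // u ∈ A} → ZMod d) ℂ) := by
    ext a a'
    rw [Matrix.mul_apply]
    have : ∀ v : {u // u ∈ A} → ZMod d, Φi a v * Φ v a' = ω ^ (∑ u, (a' u - a u) * v u).val := by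
      intro v
      rw [hΦ, hΦi]
      show ω ^ (∑ u, (-(a u)) * v u).val * ω ^ (∑ u, v u * a' u).val = _
      rw [← chi_add h1]
      congr 1
      exact congrArg ZMod.val (by
        rw [← Finset.sum_add_distrib]
        exact Finset.sum_congr rfl fun u _ => by ring)
    simp_rw [this]
    rw [chi_orth_vec hω (fun u => a' u - a u)]
    by_cases h : a' = a
    · subst h
      rw [if_pos (by funext u; simp), Matrix.smul_apply, Matrix.one_apply_eq, smul_eq_mul,
        mul_one, hg0]
    · rw [if_neg (fun hh => h (funext fun u => by
        have := congrFun hh u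
        simpa [sub_eq_zero] using this)),
        Matrix.smul_apply, Matrix.one_apply_ne (fun hh => h hh.symm), smul_eq_mul, mul_zero]
  set W : Matrix ({u // u ∈ A} → ZMod d) ({u // u ∈ Aᶜ} → ZMod d) ℂ := fun v b => if v = M.mulVec b then 1 else 0 with hW
  have hΨeq : Ψ = c • (Φ * W) := by
    ext a b
    rw [hΨdef]
    show ψ (glue a b) = _
    rw [hψ, Matrix.smul_apply, Matrix.mul_apply, smul_eq_mul]
    have hterm : ∀ v : {u // u ∈ A} → ZMod d,
        Φ a v * W v b = if v = M.mulVec b then Φ a v else 0 := by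
      intro v
      rw [hW]
      show Φ a v * (if v = M.mulVec b then 1 else 0) = _
      split_ifs <;> simp
    have hsum : ∑ v : {u // u ∈ A} → ZMod d, Φ a v * W v b = Φ a (M.mulVec b) := by
      simp_rw [hterm]
      rw [Finset.sum_ite_eq' Finset.univ (M.mulVec b) (fun v => Φ a v),
        if_pos (Finset.mem_univ _)]
    rw [hsum, hΦ]
    show _ = c * ω ^ (∑ u, a u * M.mulVec b u).val
    congr 2
    have : ∀ i : {u // u ∈ A}, ∑ j : {u // u ∈ Aᶜ}, M i j * glue a b i * glue a b j
        = a i * M.mulVec (fun j => b j) i := by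
      intro i
      rw [Matrix.mulVec, dotProduct, Finset.mul_sum]
      exact Finset.sum_congr rfl fun j _ => by rw [hglueS, hglueT]; ring
    rw [Finset.sum_congr rfl fun i _ => this i]
  set P : Matrix ({u // u ∈ A} → ZMod d) (Fin N) ℂ := fun v i => if v = M.mulVec (ρ i) then 1 else 0 with hP
  set J : Matrix ({u // u ∈ Aᶜ} → ZMod d) (Fin N) ℂ := fun b i => if b = ρ i then 1 else 0 with hJ
  have hWJ : W * J = P := by
    ext v i
    rw [Matrix.mul_apply]
    have : ∀ b : {u // u ∈ Aᶜ} → ZMod d, W v b * J b i = if b = ρ i then W v b else 0 := by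
      intro b
      rw [hJ]
      show W v b * (if b = ρ i then 1 else 0) = _
      split_ifs <;> simp
    simp_rw [this]
    rw [Finset.sum_ite_eq' Finset.univ (ρ i) (fun b => W v b), if_pos (Finset.mem_univ _)]
  have hPP : Pᵀ * P = (1 : Matrix (Fin N) (Fin N) ℂ) := by
    ext i i'
    rw [Matrix.mul_apply]
    have : ∀ v : {u // u ∈ A} → ZMod d, Pᵀ i v * P v i'
        = if v = M.mulVec (ρ i) then (if v = M.mulVec (ρ i') then 1 else 0) else 0 := by
      intro v
      rw [Matrix.transpose_apply, hP]
      show (if v = M.mulVec (ρ i) then (1:ℂ) else 0) * (if v = M.mulVec (ρ i') then 1 else 0)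
        = _
      split_ifs <;> simp
    simp_rw [this]
    rw [Finset.sum_ite_eq' Finset.univ (M.mulVec (ρ i))
      (fun v => if v = M.mulVec (ρ i') then (1:ℂ) else 0), if_pos (Finset.mem_univ _)]
    by_cases h : i = i'
    · subst h
      rw [if_pos rfl, Matrix.one_apply_eq]
    · rw [if_neg (fun hh => h (hinj hh)), Matrix.one_apply_ne h]
  have hkey : Pᵀ * (Φi * (Ψ * J)) = (c * g0) • (1 : Matrix (Fin N) (Fin N) ℂ) := by
    rw [hΨeq, Matrix.smul_mul, Matrix.mul_smul, Matrix.mul_smul, Matrix.mul_assoc Φ W J,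
      hWJ, ← Matrix.mul_assoc Φi Φ P, hΦiΦ, Matrix.smul_mul, Matrix.one_mul,
      Matrix.mul_smul, hPP, smul_smul]
  have hunit : IsUnit ((c * g0) • (1 : Matrix (Fin N) (Fin N) ℂ)) := by
    rw [Matrix.isUnit_iff_isUnit_det, Matrix.det_smul, Matrix.det_one, mul_one]
    exact (IsUnit.pow _ (Ne.isUnit (mul_ne_zero hc hg0ne)))
  have hrank1 : ((c * g0) • (1 : Matrix (Fin N) (Fin N) ℂ)).rank = N := by
    rw [Matrix.rank_of_isUnit _ hunit, Fintype.card_fin]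
  calc d ^ M.rank = N := rfl
    _ = ((c * g0) • (1 : Matrix (Fin N) (Fin N) ℂ)).rank := hrank1.symm
    _ = (Pᵀ * (Φi * (Ψ * J))).rank := by rw [hkey]
    _ ≤ (Φi * (Ψ * J)).rank := Matrix.rank_mul_le_right _ _
    _ ≤ (Ψ * J).rank := Matrix.rank_mul_le_right _ _
    _ ≤ Ψ.rank := Matrix.rank_mul_le_left _ _
    _ ≤ R := hstepA

lemma split_pairs {n : ℕ} {R : Type*} [AddCommMonoid R] (A : Finset (Fin n))
    (T : Fin n → Fin n → R) (hsymm : ∀ u v, T u v = T v u)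
    (hzero : ∀ u v, ((u ∈ A ∧ v ∈ A) ∨ (u ∉ A ∧ v ∉ A)) → T u v = 0) :
    ∑ u : Fin n, ∑ v : Fin n, (if u < v then T u v else 0)
      = ∑ u ∈ A, ∑ v ∈ Aᶜ, T u v := by
  classical
  have h1 : ∀ u ∈ A, ∑ v : Fin n, (if u < v then T u v else 0)
      = ∑ v ∈ Aᶜ, (if u < v then T u v else 0) := by
    intro u hu
    rw [← Finset.sum_add_sum_compl A (fun v => if u < v then T u v else 0),
      Finset.sum_eq_zero (s := A) (fun v hv => by rw [hzero u v (Or.inl ⟨hu, hv⟩), ite_self]),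
      zero_add]
  have h2 : ∀ u ∈ Aᶜ, ∑ v : Fin n, (if u < v then T u v else 0)
      = ∑ v ∈ A, (if u < v then T u v else 0) := by
    intro u hu
    rw [← Finset.sum_add_sum_compl A (fun v => if u < v then T u v else 0),
      Finset.sum_eq_zero (s := Aᶜ) (fun v hv => by
        rw [hzero u v (Or.inr ⟨Finset.mem_compl.mp hu, Finset.mem_compl.mp hv⟩), ite_self]),
      add_zero]
  have e1 : ∑ u : Fin n, ∑ v : Fin n, (if u < v then T u v else 0)
      = (∑ u ∈ A, ∑ v ∈ Aᶜ, (if u < v then T u v else 0))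
        + (∑ u ∈ Aᶜ, ∑ v ∈ A, (if u < v then T u v else 0)) := by
    rw [← Finset.sum_add_sum_compl A (fun u => ∑ v : Fin n, (if u < v then T u v else 0))]
    congr 1
    · exact Finset.sum_congr rfl h1
    · exact Finset.sum_congr rfl h2
  have e2 : ∑ u ∈ Aᶜ, ∑ v ∈ A, (if u < v then T u v else 0)
      = ∑ u ∈ A, ∑ v ∈ Aᶜ, (if v < u then T u v else 0) := by
    rw [Finset.sum_comm]
    exact Finset.sum_congr rfl fun u _ => Finset.sum_congr rfl fun v _ =>
      if_congr Iff.rfl (hsymm v u) rfl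
  rw [e1, e2, ← Finset.sum_add_distrib]
  refine Finset.sum_congr rfl fun u hu => ?_
  rw [← Finset.sum_add_distrib]
  refine Finset.sum_congr rfl fun v hv => ?_
  have huv : u ≠ v := fun h => (Finset.mem_compl.mp hv) (h ▸ hu)
  rcases lt_trichotomy u v with h | h | h
  · rw [if_pos h, if_neg (not_lt_of_gt h), add_zero]
  · exact absurd h huv
  · rw [if_neg (not_lt_of_gt h), if_pos h, zero_add]

def submoduleProdEquiv {R M M' : Type*} [Ring R] [AddCommGroup M] [AddCommGroup M']
    [Module R M] [Module R M'] (p : Submodule R M) (q : Submodule R M') :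
    ↥(p.prod q) ≃ₗ[R] ↥p × ↥q where
  toFun x := (⟨x.1.1, (Submodule.mem_prod.mp x.2).1⟩, ⟨x.1.2, (Submodule.mem_prod.mp x.2).2⟩)
  invFun y := ⟨(y.1.1, y.2.1), Submodule.mem_prod.mpr ⟨y.1.2, y.2.2⟩⟩
  left_inv x := rfl
  right_inv y := rfl
  map_add' x y := rfl
  map_smul' c x := rfl

lemma finrank_submodule_prod {R M M' : Type*} [Field R] [AddCommGroup M] [AddCommGroup M']
    [Module R M] [Module R M'] [FiniteDimensional R M] [FiniteDimensional R M']
    (p : Submodule R M) (q : Submodule R M') :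
    Module.finrank R ↥(p.prod q) = Module.finrank R ↥p + Module.finrank R ↥q := by
  rw [(submoduleProdEquiv p q).finrank_eq]
  exact Module.finrank_prod

lemma rank_two_colorable {n : ℕ} {K : Type*} [Field K] (Γ : Matrix (Fin n) (Fin n) K)
    (hΓsymm : Γ.IsSymm) (A : Finset (Fin n))
    (hcol : ∀ u v : Fin n, (u ∈ A ∧ v ∈ A) ∨ (u ∉ A ∧ v ∉ A) → Γ u v = 0) :
    Matrix.rank Γ = 2 * Matrix.rank (Γ.submatrix (fun i : {u // u ∈ A} => (i : Fin n))
        (fun j : {u // u ∈ Aᶜ} => (j : Fin n))) := by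
  classical
  set M : Matrix {u // u ∈ A} {u // u ∈ Aᶜ} K :=
    Γ.submatrix (fun i : {u // u ∈ A} => (i : Fin n)) (fun j : {u // u ∈ Aᶜ} => (j : Fin n))
    with hM
  set N : Matrix {u // u ∈ Aᶜ} {u // u ∈ A} K :=
    Γ.submatrix (fun j : {u // u ∈ Aᶜ} => (j : Fin n)) (fun i : {u // u ∈ A} => (i : Fin n))
    with hN
  have hNM : N = M.transpose := by
    ext j i
    exact hΓsymm.apply (i : Fin n) (j : Fin n)
  -- the linear equivalence
  let e0 : ({u // u ∈ A} ⊕ {u // u ∈ Aᶜ}) ≃ Fin n :=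
    (Equiv.sumCongr (Equiv.refl _) (Equiv.subtypeEquivRight (fun u => Finset.mem_compl))).trans
      (Equiv.sumCompl (fun u => u ∈ A))
  let e : (Fin n → K) ≃ₗ[K] ({u // u ∈ A} → K) × ({u // u ∈ Aᶜ} → K) :=
    (LinearEquiv.funCongrLeft K K e0).trans
      (LinearEquiv.sumArrowLequivProdArrow _ _ K K)
  have he : ∀ x : Fin n → K,
      e x = (fun i : {u // u ∈ A} => x i, fun j : {u // u ∈ Aᶜ} => x j) := by
    intro x
    ext i
    · simp [e, e0, LinearEquiv.funCongrLeft]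
    · simp [e, e0, LinearEquiv.funCongrLeft]
  -- mulVec computations
  have hmulA : ∀ (x : Fin n → K) (i : {u // u ∈ A}),
      Γ.mulVec x (i : Fin n) = M.mulVec (fun j : {u // u ∈ Aᶜ} => x j) i := by
    intro x i
    show ∑ v, Γ (i : Fin n) v * x v = ∑ j : {u // u ∈ Aᶜ}, M i j * x (j : Fin n)
    rw [← Finset.sum_add_sum_compl A (fun v => Γ (i : Fin n) v * x v),
      Finset.sum_eq_zero (s := A) (fun v hv => by rw [hcol _ v (Or.inl ⟨i.2, hv⟩), zero_mul]),
      zero_add, ← Finset.sum_coe_sort]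
    rfl
  have hmulB : ∀ (x : Fin n → K) (j : {u // u ∈ Aᶜ}),
      Γ.mulVec x (j : Fin n) = N.mulVec (fun i : {u // u ∈ A} => x i) j := by
    intro x j
    show ∑ v, Γ (j : Fin n) v * x v = ∑ i : {u // u ∈ A}, N j i * x (i : Fin n)
    have hj : (j : Fin n) ∉ A := Finset.mem_compl.mp j.2
    rw [← Finset.sum_add_sum_compl A (fun v => Γ (j : Fin n) v * x v),
      Finset.sum_eq_zero (s := Aᶜ) (fun v hv => by
        rw [hcol _ v (Or.inr ⟨hj, Finset.mem_compl.mp hv⟩), zero_mul]),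
      add_zero, ← Finset.sum_coe_sort]
    rfl
  have hmap : Submodule.map (e : (Fin n → K) →ₗ[K] _) (LinearMap.range Γ.mulVecLin)
      = (LinearMap.range M.mulVecLin).prod (LinearMap.range N.mulVecLin) := by
    ext y
    simp only [Submodule.mem_map, LinearMap.mem_range, Submodule.mem_prod,
      Matrix.mulVecLin_apply, LinearEquiv.coe_coe]
    constructor
    · rintro ⟨z, ⟨x, rfl⟩, rfl⟩
      rw [he]
      exact ⟨⟨fun j => x j, funext fun i => (hmulA x i).symm⟩,
        ⟨fun i => x i, funext fun j => (hmulB x j).symm⟩⟩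
    · rintro ⟨⟨β, hβ⟩, ⟨α, hα⟩⟩
      refine ⟨Γ.mulVec (fun u => if h : u ∈ A then α ⟨u, h⟩ else β ⟨u, Finset.mem_compl.mpr h⟩),
        ⟨_, rfl⟩, ?_⟩
      rw [he]
      have h1 : (fun j : {u // u ∈ Aᶜ} =>
          (fun u => if h : u ∈ A then α ⟨u, h⟩ else β ⟨u, Finset.mem_compl.mpr h⟩) (j : Fin n))
          = β := by
        funext j
        exact dif_neg (Finset.mem_compl.mp j.2)
      have h2 : (fun i : {u // u ∈ A} =>
          (fun u => if h : u ∈ A then α ⟨u, h⟩ else β ⟨u, Finset.mem_compl.mpr h⟩) (i : Fin n))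
          = α := by
        funext i
        exact dif_pos i.2
      ext1
      · funext i
        show Γ.mulVec _ (i : Fin n) = y.1 i
        rw [hmulA, h1, hβ]
      · funext j
        show Γ.mulVec _ (j : Fin n) = y.2 j
        rw [hmulB, h2, hα]
  have : Matrix.rank Γ = Module.finrank K ↥(LinearMap.range Γ.mulVecLin) := rfl
  rw [this, ← LinearEquiv.finrank_map_eq e, hmap, finrank_submodule_prod]
  show Matrix.rank M + Matrix.rank N = 2 * Matrix.rank M
  rw [hNM, Matrix.rank_transpose, two_mul]

lemma mem_schmidt_set {d n : ℕ} [NeZero d] (hn : 1 ≤ n) {ω : ℂ} (h1 : ω ^ d = 1)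
    (ψ : (Fin n → ZMod d) → ℂ) (c : ℂ) (C : Finset (Fin n)) (W : Fin n → Fin n → ZMod d)
    (hψ : ∀ x, ψ x = c * ω ^ (∑ u ∈ C, ∑ v ∈ Cᶜ, W u v * x u * x v).val) :
    ∃ f : Fin (d ^ C.card) → Fin n → ZMod d → ℂ, ∀ x, ψ x = ∑ i, ∏ j, f i j (x j) := by
  classical
  have hcard : Fintype.card ({u // u ∈ C} → ZMod d) = d ^ C.card := by
    rw [Fintype.card_fun, ZMod.card, Fintype.card_coe]
  let g : Fin (d ^ C.card) ≃ ({u // u ∈ C} → ZMod d) := (Fintype.equivFinOfCardEq hcard).symm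
  let j0 : Fin n := ⟨0, hn⟩
  set P : ({u // u ∈ C} → ZMod d) → (Fin n → ZMod d) → ZMod d :=
    fun a x => ∑ j : {u // u ∈ Cᶜ}, x j * ∑ u : {u // u ∈ C}, W u j * a u with hP
  refine ⟨fun i j k =>
    (if j = j0 then c else 1) *
    (if h : j ∈ C then (if g i ⟨j, h⟩ = k then 1 else 0)
     else ω ^ (k * ∑ u : {u // u ∈ C}, W u j * g i u).val), fun x => ?_⟩
  have hprod : ∀ a : {u // u ∈ C} → ZMod d,
      (∏ j : Fin n, ((if j = j0 then c else 1) *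
        (if h : j ∈ C then (if a ⟨j, h⟩ = x j then 1 else 0)
         else ω ^ (x j * ∑ u : {u // u ∈ C}, W u j * a u).val)))
      = c * ((if a = (fun u : {u // u ∈ C} => x u) then 1 else 0) * ω ^ (P a x).val) := by
    intro a
    rw [Finset.prod_mul_distrib]
    congr 1
    · rw [Finset.prod_ite_eq' Finset.univ j0 (fun _ => c)]
      simp
    · rw [← Finset.prod_mul_prod_compl C]
      congr 1
      · rw [← Finset.prod_coe_sort]
        rw [show (∏ j : {u // u ∈ C}, (if h : (j : Fin n) ∈ C
            then (if a ⟨j, h⟩ = x j then 1 else 0)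
            else ω ^ (x j * ∑ u : {u // u ∈ C}, W u j * a u).val))
          = ∏ j : {u // u ∈ C}, (if a j = x j then (1:ℂ) else 0) from
          Finset.prod_congr rfl fun j _ => dif_pos j.2]
        rw [Finset.prod_boole]
        congr 1
        simp only [eq_iff_iff]
        constructor
        · intro h
          funext u
          exact h u (Finset.mem_univ u)
        · intro h u _
          exact congrFun h u
      · rw [← Finset.prod_coe_sort, hP, chi_sum h1]
        exact Finset.prod_congr rfl fun j _ => dif_neg (Finset.mem_compl.mp j.2)
  have hexp : P (fun u : {u // u ∈ C} => x u) x
      = ∑ u ∈ C, ∑ v ∈ Cᶜ, W u v * x u * x v := by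
    rw [hP]
    calc ∑ j : {u // u ∈ Cᶜ}, x j * ∑ u : {u // u ∈ C}, W u j * x u
        = ∑ j : {u // u ∈ Cᶜ}, ∑ u : {u // u ∈ C}, W u j * x u * x j := by
          refine Finset.sum_congr rfl fun j _ => ?_
          rw [Finset.mul_sum]
          exact Finset.sum_congr rfl fun u _ => by ring
      _ = ∑ u : {u // u ∈ C}, ∑ j : {u // u ∈ Cᶜ}, W u j * x u * x j := Finset.sum_comm
      _ = ∑ u ∈ C, ∑ v ∈ Cᶜ, W u v * x u * x v := by
          rw [← Finset.sum_coe_sort C (fun u => ∑ v ∈ Cᶜ, W u v * x u * x v)]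
          exact Finset.sum_congr rfl fun u _ => Finset.sum_coe_sort Cᶜ (fun v => W u v * x u * x v)
  calc ψ x = c * ω ^ (∑ u ∈ C, ∑ v ∈ Cᶜ, W u v * x u * x v).val := hψ x
    _ = c * ω ^ (P (fun u : {u // u ∈ C} => x u) x).val := by rw [hexp]
    _ = ∑ a : {u // u ∈ C} → ZMod d,
        c * ((if a = (fun u : {u // u ∈ C} => x u) then 1 else 0) * ω ^ (P a x).val) := by
        simp_rw [boole_mul]
        rw [← Finset.mul_sum, Finset.sum_ite_eq' Finset.univ
          (fun u : {u // u ∈ C} => x u) (fun a => ω ^ (P a x).val),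
          if_pos (Finset.mem_univ _)]
    _ = ∑ i, c * ((if g i = (fun u : {u // u ∈ C} => x u) then 1 else 0)
          * ω ^ (P (g i) x).val) :=
        (Equiv.sum_comp g (fun a => c * ((if a = (fun u : {u // u ∈ C} => x u) then 1 else 0)
          * ω ^ (P a x).val))).symm
    _ = ∑ i, ∏ j, ((if j = j0 then c else 1) *
        (if h : j ∈ C then (if g i ⟨j, h⟩ = x j then 1 else 0)
         else ω ^ (x j * ∑ u : {u // u ∈ C}, W u j * g i u).val)) := by
        exact Finset.sum_congr rfl fun i _ => (hprod (g i)).symm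

end Aux

/-- If the weighted graph of `Γ` is two-colorable with parts `A` and `B = Aᶜ`, then the
rank of `Γ` equals twice the rank of the off-diagonal block `Γ_{A,B}`, and the Schmidt
rank of the graph state is bounded below by `d ^ rank Γ_{A,B}` and above by
`d ^ min |A| |B|`. -/



theorem schmidtRank_two_colorable
    (d n : ℕ) (hd : Nat.Prime d) (hn : 1 ≤ n)
    (ω : ℂ) (hω : IsPrimitiveRoot ω d)
    (Γ : Matrix (Fin n) (Fin n) (ZMod d)) (hΓsymm : Γ.IsSymm) (hΓdiag : ∀ u, Γ u u = 0)
    (A : Finset (Fin n))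
    (hcol : ∀ u v : Fin n, (u ∈ A ∧ v ∈ A) ∨ (u ∉ A ∧ v ∉ A) → Γ u v = 0) :
    Matrix.rank Γ = 2 * Matrix.rank (Γ.submatrix (fun i : {u // u ∈ A} => (i : Fin n))
        (fun j : {u // u ∈ Aᶜ} => (j : Fin n))) ∧
      d ^ Matrix.rank (Γ.submatrix (fun i : {u // u ∈ A} => (i : Fin n))
          (fun j : {u // u ∈ Aᶜ} => (j : Fin n)))
        ≤ schmidtRank (graphState d n ω Γ) ∧
      schmidtRank (graphState d n ω Γ) ≤ d ^ min A.card Aᶜ.card := by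
  haveI : Fact (Nat.Prime d) := ⟨hd⟩
  haveI : NeZero d := ⟨hd.ne_zero⟩
  classical
  have h1 : ω ^ d = 1 := hω.pow_eq_one
  set ψ := graphState d n ω Γ with hψdef
  set M : Matrix {u // u ∈ A} {u // u ∈ Aᶜ} (ZMod d) :=
    Γ.submatrix (fun i : {u // u ∈ A} => (i : Fin n)) (fun j : {u // u ∈ Aᶜ} => (j : Fin n))
    with hMdef
  set c : ℂ := (((d : ℝ) ^ (-(n : ℝ) / 2) : ℝ) : ℂ) with hcdef
  have hc : c ≠ 0 := by
    rw [hcdef]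
    exact Complex.ofReal_ne_zero.mpr (ne_of_gt (Real.rpow_pos_of_pos
      (by exact_mod_cast hd.pos) _))
  have hE : ∀ x : Fin n → ZMod d,
      (∑ u : Fin n, ∑ v : Fin n, if u < v then Γ u v * x u * x v else 0)
        = ∑ u ∈ A, ∑ v ∈ Aᶜ, Γ u v * x u * x v := by
    intro x
    refine split_pairs A (fun u v => Γ u v * x u * x v) ?_ ?_
    · intro u v
      show Γ u v * x u * x v = Γ v u * x v * x u
      rw [← hΓsymm.apply u v]
      ring
    · intro u v h
      show Γ u v * x u * x v = 0
      rw [hcol u v h, zero_mul, zero_mul]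
  have hψ2 : ∀ x, ψ x = c * ω ^ (∑ u ∈ A, ∑ v ∈ Aᶜ, Γ u v * x u * x v).val := by
    intro x
    show c * ω ^ (∑ u : Fin n, ∑ v : Fin n, if u < v then Γ u v * x u * x v else 0).val = _
    rw [hE x]
  have hψ3 : ∀ x, ψ x = c * ω ^ (∑ i : {u // u ∈ A}, ∑ j : {u // u ∈ Aᶜ},
      M i j * x (i : Fin n) * x (j : Fin n)).val := by
    intro x
    rw [hψ2 x]
    refine congrArg (fun t : ZMod d => c * ω ^ t.val) ?_
    rw [← Finset.sum_coe_sort A (fun u => ∑ v ∈ Aᶜ, Γ u v * x u * x v)]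
    exact Finset.sum_congr rfl fun i _ =>
      (Finset.sum_coe_sort Aᶜ (fun v => Γ (i : Fin n) v * x (i : Fin n) * x v)).symm
  have hmem1 : d ^ A.card ∈ {R : ℕ | ∃ f : Fin R → Fin n → ZMod d → ℂ,
      ∀ x, ψ x = ∑ i, ∏ j, f i j (x j)} :=
    mem_schmidt_set hn h1 ψ c A (fun u v => Γ u v) hψ2
  have hmem2 : d ^ Aᶜ.card ∈ {R : ℕ | ∃ f : Fin R → Fin n → ZMod d → ℂ,
      ∀ x, ψ x = ∑ i, ∏ j, f i j (x j)} := by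
    refine mem_schmidt_set hn h1 ψ c Aᶜ (fun u v => Γ v u) ?_
    intro x
    rw [hψ2 x]
    refine congrArg (fun t : ZMod d => c * ω ^ t.val) ?_
    rw [compl_compl, Finset.sum_comm]
    exact Finset.sum_congr rfl fun v _ => Finset.sum_congr rfl fun u _ => by ring
  have hlow : ∀ R ∈ {R : ℕ | ∃ f : Fin R → Fin n → ZMod d → ℂ,
      ∀ x, ψ x = ∑ i, ∏ j, f i j (x j)}, d ^ M.rank ≤ R := by
    rintro R ⟨f, hf⟩
    exact schmidt_lower_bound hω A M ψ c hc hψ3 R f hf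
  refine ⟨rank_two_colorable Γ hΓsymm A hcol, ?_, ?_⟩
  · have hne : {R : ℕ | ∃ f : Fin R → Fin n → ZMod d → ℂ,
        ∀ x, ψ x = ∑ i, ∏ j, f i j (x j)}.Nonempty := ⟨_, hmem1⟩
    exact hlow _ (Nat.sInf_mem hne)
  · rcases min_choice A.card Aᶜ.card with h | h
    · rw [h]
      exact Nat.sInf_le hmem1
    · rw [h]
      exact Nat.sInf_le hmem2
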